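/- Let n be a natural number and let σ and τ be finitely generated convex cones in ℝⁿ (each the set of all nonnegative real linear combinations of a finite family of vectors) whose linear spans equal all of ℝⁿ. For a cone C, call a subset F a face of C if there is a linear functional ℓ on ℝⁿ which is nonnegative on C such that F = {x ∈ C : ℓ(x) = 0}; say that τ crosses σ if σ ∩ τ is not a face of σ. If τ crosses σ, then there exists a face F of τ whose linear span has dimension n − 1 such that F crosses σ, i.e., σ ∩ F is not a face of σ. -/

import Mathlib

/-- A finitely generated convex cone in `ℝⁿ`: the set of all nonnegative real linear
combinations of a finite family of vectors. -/
def IsFGConvexCone {n : ℕ} (C : Set (Fin n → ℝ)) : Prop :=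
  ∃ (m : ℕ) (v : Fin m → (Fin n → ℝ)),
    C = {x | ∃ c : Fin m → ℝ, (∀ i, 0 ≤ c i) ∧ x = ∑ i, c i • v i}

/-- `F` is a face of `C`: there is a linear functional `ℓ`, nonnegative on `C`, with
`F = {x ∈ C | ℓ x = 0}`. -/
def IsFaceOf {n : ℕ} (F C : Set (Fin n → ℝ)) : Prop :=
  ∃ ℓ : (Fin n → ℝ) →ₗ[ℝ] ℝ, (∀ x ∈ C, 0 ≤ ℓ x) ∧ F = {x ∈ C | ℓ x = 0}

section Aux

open Finset

set_option maxHeartbeats 1000000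

variable {n : ℕ}

def polyS {n : ℕ} (D : Finset ((Fin n → ℝ) →ₗ[ℝ] ℝ)) : Set (Fin n → ℝ) :=
  {x | ∀ ℓ ∈ D, 0 ≤ ℓ x}

theorem polyS_add_ray (D : Finset ((Fin n → ℝ) →ₗ[ℝ] ℝ)) (v : Fin n → ℝ) :
    ∃ D' : Finset ((Fin n → ℝ) →ₗ[ℝ] ℝ),
      {y | ∃ x ∈ polyS D, ∃ t : ℝ, 0 ≤ t ∧ y = x + t • v} = polyS D' := by
  classical
  set P : Finset _ := D.filter (fun ℓ => 0 < ℓ v) with hP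
  set N : Finset _ := D.filter (fun ℓ => ℓ v < 0) with hN
  set Z : Finset _ := D.filter (fun ℓ => ℓ v = 0) with hZ
  refine ⟨Z ∪ P ∪ (P ×ˢ N).image (fun pq => (pq.1 v) • pq.2 - (pq.2 v) • pq.1), ?_⟩
  ext y
  simp only [Set.mem_setOf_eq, polyS]
  constructor
  · rintro ⟨x, hx, t, ht, rfl⟩
    intro ℓ hℓ
    simp only [mem_union, mem_image, mem_product] at hℓ
    rcases hℓ with (hℓ | hℓ) | ⟨⟨p, q⟩, ⟨hp, hq⟩, rfl⟩
    · rw [hZ, mem_filter] at hℓ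
      have := hx ℓ hℓ.1
      simp [map_add, map_smul, hℓ.2]
      linarith [hx ℓ hℓ.1]
    · rw [hP, mem_filter] at hℓ
      have h1 := hx ℓ hℓ.1
      have h2 := hℓ.2
      simp only [map_add, map_smul, smul_eq_mul]
      nlinarith
    · rw [hP, mem_filter] at hp
      rw [hN, mem_filter] at hq
      have h1 := hx p hp.1
      have h2 := hx q hq.1
      have h3 := hp.2
      have h4 := hq.2
      simp only [LinearMap.sub_apply, LinearMap.smul_apply, map_add, map_smul, smul_eq_mul]
      nlinarith
  · intro hy
    -- choose t
    by_cases hNe : N.Nonempty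
    · set t : ℝ := max 0 (N.sup' hNe (fun ℓ => ℓ y / ℓ v)) with htdef
      have ht0 : 0 ≤ t := le_max_left _ _
      have htn : ∀ ℓ ∈ N, ℓ y / ℓ v ≤ t := by
        intro ℓ hℓ
        exact le_trans (Finset.le_sup' (fun ℓ' => ℓ' y / ℓ' v) hℓ) (le_max_right _ _)
      have htp : ∀ p ∈ P, t ≤ p y / p v := by
        intro p hp
        rw [hP, mem_filter] at hp
        apply max_le
        · apply div_nonneg _ (le_of_lt hp.2)
          exact hy p (by simp [hP, mem_filter, hp.1, hp.2])
        · apply Finset.sup'_le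
          intro q hq
          have hq' := hq
          rw [hN, mem_filter] at hq'
          have hqv : q v < 0 := hq'.2
          have hpv : 0 < p v := hp.2
          have hh : 0 ≤ p v * q y - q v * p y := by
            have := hy ((p v) • q - (q v) • p) (by
              simp only [mem_union, mem_image, mem_product]
              exact Or.inr ⟨(p, q), ⟨by rw [hP, mem_filter]; exact ⟨hp.1, hp.2⟩, hq⟩, rfl⟩)
            simpa [LinearMap.sub_apply, LinearMap.smul_apply, smul_eq_mul] using this
          have hqv' : 0 < -(q v) := by linarith
          have heq : q y / q v = (-(q y)) / (-(q v)) := (neg_div_neg_eq _ _).symm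
          rw [heq, div_le_div_iff₀ hqv' hpv]
          nlinarith
      refine ⟨y - t • v, ?_, t, ht0, by ring⟩
      intro ℓ hℓ
      rcases lt_trichotomy (ℓ v) 0 with hv | hv | hv
      · have h1 := htn ℓ (by rw [hN, mem_filter]; exact ⟨hℓ, hv⟩)
        have h2 : t * ℓ v ≤ (ℓ y / ℓ v) * ℓ v := by
          exact mul_le_mul_of_nonpos_right h1 (le_of_lt hv)
        rw [div_mul_cancel₀ _ (ne_of_lt hv)] at h2
        simp only [map_sub, map_smul, smul_eq_mul]
        linarith
      · simp only [map_sub, map_smul, smul_eq_mul, hv, mul_zero, sub_zero]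
        exact hy ℓ (by simp only [mem_union]; exact Or.inl (Or.inl (by rw [hZ, mem_filter]; exact ⟨hℓ, hv⟩)))
      · have hp : ℓ ∈ P := by rw [hP, mem_filter]; exact ⟨hℓ, hv⟩
        have h1 := htp ℓ hp
        have h2 : t * ℓ v ≤ (ℓ y / ℓ v) * ℓ v :=
          mul_le_mul_of_nonneg_right h1 (le_of_lt hv)
        rw [div_mul_cancel₀ _ (ne_of_gt hv)] at h2
        simp only [map_sub, map_smul, smul_eq_mul]
        linarith
    · -- N empty: take t = 0
      refine ⟨y, ?_, 0, le_refl _, by simp⟩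
      intro ℓ hℓ
      rcases lt_trichotomy (ℓ v) 0 with hv | hv | hv
      · exact absurd ⟨ℓ, by rw [hN, mem_filter]; exact ⟨hℓ, hv⟩⟩ hNe
      · exact hy ℓ (by simp only [mem_union]; exact Or.inl (Or.inl (by rw [hZ, mem_filter]; exact ⟨hℓ, hv⟩)))
      · exact hy ℓ (by simp only [mem_union]; exact Or.inl (Or.inr (by rw [hP, mem_filter]; exact ⟨hℓ, hv⟩)))

/-- Weyl: every finitely generated cone is polyhedral. -/
theorem weyl (m : ℕ) (v : Fin m → (Fin n → ℝ)) :
    ∃ D : Finset ((Fin n → ℝ) →ₗ[ℝ] ℝ),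
      {x | ∃ c : Fin m → ℝ, (∀ i, 0 ≤ c i) ∧ x = ∑ i, c i • v i} = polyS D := by
  classical
  induction m with
  | zero =>
    refine ⟨(univ.image fun i : Fin n => LinearMap.proj i) ∪
            (univ.image fun i : Fin n => -(LinearMap.proj i : (Fin n → ℝ) →ₗ[ℝ] ℝ)), ?_⟩
    ext x
    simp only [Set.mem_setOf_eq, polyS]
    constructor
    · rintro ⟨c, -, rfl⟩
      intro ℓ hℓ
      simp only [mem_union, mem_image, mem_univ, true_and] at hℓ
      have : (∑ i : Fin 0, c i • v i) = 0 := by simp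
      rcases hℓ with ⟨i, rfl⟩ | ⟨i, rfl⟩ <;> simp [this]
    · intro h
      refine ⟨fun i => 0, fun i => le_refl _, ?_⟩
      have hx : ∀ i : Fin n, x i = 0 := by
        intro i
        have h1 := h (LinearMap.proj i) (by simp [mem_union, mem_image])
        have h2 := h (-(LinearMap.proj i : (Fin n → ℝ) →ₗ[ℝ] ℝ))
          (by simp [mem_union, mem_image])
        simp only [LinearMap.proj_apply, LinearMap.neg_apply] at h1 h2
        linarith
      funext i
      simp [hx i]
  | succ m ih =>
    obtain ⟨D, hD⟩ := ih (fun i => v i.succ)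
    obtain ⟨D', hD'⟩ := polyS_add_ray D (v 0)
    refine ⟨D', ?_⟩
    rw [← hD']
    ext y
    simp only [Set.mem_setOf_eq]
    constructor
    · rintro ⟨c, hc, rfl⟩
      refine ⟨∑ i : Fin m, c i.succ • v i.succ, ?_, c 0, hc 0, ?_⟩
      · rw [← hD]; exact ⟨fun i => c i.succ, fun i => hc i.succ, rfl⟩
      · rw [Fin.sum_univ_succ, add_comm]
    · rintro ⟨x, hx, t, ht, rfl⟩
      rw [← hD] at hx
      obtain ⟨c, hc, rfl⟩ := hx
      refine ⟨Fin.cons t c, ?_, ?_⟩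
      · intro i
        refine Fin.cases ?_ ?_ i
        · simpa using ht
        · intro j; simpa using hc j
      · rw [Fin.sum_univ_succ]
        simp only [Fin.cons_zero, Fin.cons_succ]
        rw [add_comm]

lemma fg_zero_mem {C : Set (Fin n → ℝ)} (h : IsFGConvexCone C) : (0 : Fin n → ℝ) ∈ C := by
  obtain ⟨m, v, rfl⟩ := h
  exact ⟨fun _ => 0, fun _ => le_refl _, by simp⟩

lemma fg_add_mem {C : Set (Fin n → ℝ)} (h : IsFGConvexCone C) {x y : Fin n → ℝ}
    (hx : x ∈ C) (hy : y ∈ C) : x + y ∈ C := by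
  obtain ⟨m, v, rfl⟩ := h
  obtain ⟨c, hc, rfl⟩ := hx
  obtain ⟨d, hd, rfl⟩ := hy
  refine ⟨fun i => c i + d i, fun i => add_nonneg (hc i) (hd i), ?_⟩
  rw [← Finset.sum_add_distrib]
  congr 1; funext i; rw [add_smul]

lemma fg_smul_mem {C : Set (Fin n → ℝ)} (h : IsFGConvexCone C) {t : ℝ} (ht : 0 ≤ t)
    {x : Fin n → ℝ} (hx : x ∈ C) : t • x ∈ C := by
  obtain ⟨m, v, rfl⟩ := h
  obtain ⟨c, hc, rfl⟩ := hx
  refine ⟨fun i => t * c i, fun i => mul_nonneg ht (hc i), ?_⟩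
  rw [Finset.smul_sum]
  congr 1; funext i; rw [smul_smul]

lemma fg_sum_mem {C : Set (Fin n → ℝ)} (h : IsFGConvexCone C) {ι : Type*}
    (s : Finset ι) (g : ι → (Fin n → ℝ)) (hg : ∀ i ∈ s, g i ∈ C) :
    (∑ i ∈ s, g i) ∈ C := by
  classical
  induction s using Finset.induction with
  | empty => simpa using fg_zero_mem h
  | insert _ _ hni ih =>
    rw [Finset.sum_insert hni]
    exact fg_add_mem h (hg _ (Finset.mem_insert_self _ _))
      (ih fun i hi => hg i (Finset.mem_insert_of_mem hi))

end Aux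

set_option maxHeartbeats 1000000 in
/-- Let `σ` and `τ` be finitely generated convex cones in `ℝⁿ` whose
linear spans are all of `ℝⁿ`. If `τ` crosses `σ` (i.e. `σ ∩ τ` is not a face of `σ`),
then there is a face `F` of `τ` whose linear span has dimension `n - 1` such that `F`
crosses `σ`. -/
theorem exists_codim_one_face_crossing
    {n : ℕ} (σ τ : Set (Fin n → ℝ))
    (hσ : IsFGConvexCone σ) (hτ : IsFGConvexCone τ)
    (hσspan : Submodule.span ℝ σ = ⊤) (hτspan : Submodule.span ℝ τ = ⊤)
    (hcross : ¬ IsFaceOf (σ ∩ τ) σ) :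
    ∃ F : Set (Fin n → ℝ), IsFaceOf F τ ∧
      Module.finrank ℝ (Submodule.span ℝ F) = n - 1 ∧
      ¬ IsFaceOf (σ ∩ F) σ := by
  classical
  -- a minimal polyhedral representation of τ
  have hex : ∃ k : ℕ, ∃ D : Finset ((Fin n → ℝ) →ₗ[ℝ] ℝ), D.card = k ∧ τ = polyS D := by
    obtain ⟨m, v, hveq⟩ := hτ
    obtain ⟨D, hD⟩ := weyl m v
    exact ⟨D.card, D, rfl, by rw [hveq, hD]⟩
  obtain ⟨D, hDcard, hDτ⟩ := Nat.find_spec hex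
  have hmin : ∀ D' : Finset ((Fin n → ℝ) →ₗ[ℝ] ℝ), τ = polyS D' → D.card ≤ D'.card := by
    intro D' hD'
    rw [hDcard]
    by_contra hlt
    push_neg at hlt
    exact Nat.find_min hex hlt ⟨D', rfl, hD'⟩
  -- irredundancy
  have hirr : ∀ ℓ ∈ D, ∃ z, (∀ ℓ' ∈ D.erase ℓ, 0 ≤ ℓ' z) ∧ ℓ z < 0 := by
    intro ℓ hℓ
    by_contra hc
    push_neg at hc
    have heq : τ = polyS (D.erase ℓ) := by
      rw [hDτ]
      ext x
      simp only [polyS, Set.mem_setOf_eq]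
      constructor
      · intro h ℓ' hℓ'
        exact h ℓ' (Finset.mem_of_mem_erase hℓ')
      · intro h ℓ' hℓ'
        by_cases hℓℓ' : ℓ' = ℓ
        · subst hℓℓ'; exact hc x h
        · exact h ℓ' (Finset.mem_erase.mpr ⟨hℓℓ', hℓ'⟩)
    have := hmin _ heq
    have := Finset.card_erase_lt_of_mem hℓ
    omega
  have hne0 : ∀ ℓ ∈ D, ℓ ≠ 0 := by
    intro ℓ hℓ h0
    obtain ⟨z, -, hz⟩ := hirr ℓ hℓ
    rw [h0] at hz
    simp at hz
  -- interior point of τ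
  have hint : ∃ x₀ ∈ τ, ∀ ℓ ∈ D, 0 < ℓ x₀ := by
    have hpos : ∀ ℓ ∈ D, ∃ x ∈ τ, 0 < ℓ x := by
      intro ℓ hℓ
      by_contra hc
      push_neg at hc
      have hker : ∀ x ∈ τ, ℓ x = 0 := by
        intro x hx
        have h1 : 0 ≤ ℓ x := by rw [hDτ] at hx; exact hx ℓ hℓ
        exact le_antisymm (hc x hx) h1
      have : Submodule.span ℝ τ ≤ LinearMap.ker ℓ := by
        rw [Submodule.span_le]
        intro x hx
        exact hker x hx
      rw [hτspan, top_le_iff, LinearMap.ker_eq_top] at this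
      exact hne0 ℓ hℓ this
    set g : ((Fin n → ℝ) →ₗ[ℝ] ℝ) → (Fin n → ℝ) :=
      fun ℓ => if h : ℓ ∈ D then (hpos ℓ h).choose else 0 with hg
    have hgτ : ∀ ℓ ∈ D, g ℓ ∈ τ := by
      intro ℓ hℓ; rw [hg]; simp only [dif_pos hℓ]; exact (hpos ℓ hℓ).choose_spec.1
    have hgpos : ∀ ℓ ∈ D, 0 < ℓ (g ℓ) := by
      intro ℓ hℓ; rw [hg]; simp only [dif_pos hℓ]; exact (hpos ℓ hℓ).choose_spec.2
    refine ⟨∑ ℓ ∈ D, g ℓ, fg_sum_mem hτ D g hgτ, ?_⟩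
    intro ℓ hℓ
    rw [map_sum]
    apply Finset.sum_pos' (fun ℓ' hℓ' => by rw [hDτ] at hgτ; exact hgτ ℓ' hℓ' ℓ hℓ)
    exact ⟨ℓ, hℓ, hgpos ℓ hℓ⟩
  obtain ⟨x₀, hx₀τ, hx₀pos⟩ := hint
  -- facets
  have hfacet : ∀ ℓ ∈ D, IsFaceOf {x ∈ τ | ℓ x = 0} τ ∧
      Module.finrank ℝ (Submodule.span ℝ {x ∈ τ | ℓ x = 0}) = n - 1 := by
    intro ℓ hℓ
    have hface : IsFaceOf {x ∈ τ | ℓ x = 0} τ :=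
      ⟨ℓ, fun x hx => by rw [hDτ] at hx; exact hx ℓ hℓ, rfl⟩
    refine ⟨hface, ?_⟩
    obtain ⟨z, hz, hzneg⟩ := hirr ℓ hℓ
    have hapos : 0 < ℓ x₀ := hx₀pos ℓ hℓ
    have hd : 0 < ℓ x₀ - ℓ z := by linarith
    set t := ℓ x₀ / (ℓ x₀ - ℓ z) with htd
    have ht0 : 0 < t := div_pos hapos hd
    have ht1 : t < 1 := by rw [htd, div_lt_one hd]; linarith
    set w := (1 - t) • x₀ + t • z with hw
    have htc : t * (ℓ x₀ - ℓ z) = ℓ x₀ := div_mul_cancel₀ _ (ne_of_gt hd)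
    have hwℓ : ℓ w = 0 := by
      simp only [hw, map_add, map_smul, smul_eq_mul]; nlinarith
    have hwpos : ∀ ℓ' ∈ D.erase ℓ, 0 < ℓ' w := by
      intro ℓ' hℓ'
      have h1 := hx₀pos ℓ' (Finset.mem_of_mem_erase hℓ')
      have h2 := hz ℓ' hℓ'
      simp only [hw, map_add, map_smul, smul_eq_mul]
      nlinarith
    have hwτ : w ∈ τ := by
      rw [hDτ]
      intro ℓ' hℓ'
      by_cases h : ℓ' = ℓ
      · rw [h, hwℓ]
      · exact le_of_lt (hwpos ℓ' (Finset.mem_erase.mpr ⟨h, hℓ'⟩))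
    have hspan : Submodule.span ℝ {x ∈ τ | ℓ x = 0} = LinearMap.ker ℓ := by
      apply le_antisymm
      · rw [Submodule.span_le]
        intro x hx
        exact hx.2
      · intro u hu
        have huℓ : ℓ u = 0 := hu
        have hε : ∃ ε : ℝ, 0 < ε ∧ ∀ ℓ' ∈ D.erase ℓ, ε * |ℓ' u| < ℓ' w := by
          by_cases hE : (D.erase ℓ).Nonempty
          · refine ⟨(D.erase ℓ).inf' hE (fun ℓ' => ℓ' w / (|ℓ' u| + 1)), ?_, ?_⟩
            · rw [Finset.lt_inf'_iff]
              intro ℓ' hℓ'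
              exact div_pos (hwpos ℓ' hℓ') (by positivity)
            · intro ℓ' hℓ'
              have h1 : (D.erase ℓ).inf' hE (fun ℓ'' => ℓ'' w / (|ℓ'' u| + 1)) ≤
                  ℓ' w / (|ℓ' u| + 1) := Finset.inf'_le _ hℓ'
              have h2 : (0:ℝ) ≤ |ℓ' u| := abs_nonneg _
              have h3 : 0 < ℓ' w := hwpos ℓ' hℓ'
              calc (D.erase ℓ).inf' hE (fun ℓ'' => ℓ'' w / (|ℓ'' u| + 1)) * |ℓ' u|
                  ≤ (ℓ' w / (|ℓ' u| + 1)) * |ℓ' u| := mul_le_mul_of_nonneg_right h1 h2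
                _ < ℓ' w := by
                    rw [div_mul_eq_mul_div, div_lt_iff₀ (by positivity)]
                    nlinarith
          · exact ⟨1, one_pos, fun ℓ' hℓ' => absurd ⟨ℓ', hℓ'⟩ hE⟩
        obtain ⟨ε, hε0, hεlt⟩ := hε
        have hmem : ∀ s : ℝ, |s| = ε → w + s • u ∈ {x ∈ τ | ℓ x = 0} := by
          intro s hs
          refine ⟨?_, by simp [map_add, map_smul, hwℓ, huℓ]⟩
          rw [hDτ]
          intro ℓ' hℓ'
          by_cases h : ℓ' = ℓ
          · subst h
            simp only [map_add, map_smul, smul_eq_mul, hwℓ, huℓ, mul_zero, add_zero, le_refl]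
          · have h1 := hεlt ℓ' (Finset.mem_erase.mpr ⟨h, hℓ'⟩)
            have h2 : |s * ℓ' u| = ε * |ℓ' u| := by rw [abs_mul, hs]
            have h3 := neg_abs_le (s * ℓ' u)
            simp only [map_add, map_smul, smul_eq_mul]
            linarith
        have h1 := hmem ε (abs_of_pos hε0)
        have h2 := hmem (-ε) (by rw [abs_neg, abs_of_pos hε0])
        have hsub : (w + ε • u) - (w + (-ε) • u) = (2 * ε) • u := by
          rw [neg_smul]
          ext i
          simp only [Pi.sub_apply, Pi.add_apply, Pi.smul_apply, Pi.neg_apply, smul_eq_mul]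
          ring
        have hu2 : u = (1 / (2 * ε)) • ((2 * ε) • u) := by
          rw [smul_smul, one_div_mul_cancel (ne_of_gt (by positivity)), one_smul]
        rw [hu2, ← hsub]
        exact Submodule.smul_mem _ _ (Submodule.sub_mem _ (Submodule.subset_span h1)
          (Submodule.subset_span h2))
    rw [hspan]
    have hsurj : Function.Surjective ℓ := by
      intro rr
      exact ⟨(rr / ℓ x₀) • x₀, by rw [map_smul, smul_eq_mul, div_mul_cancel₀ _ (ne_of_gt hapos)]⟩
    have h1 : Module.finrank ℝ (LinearMap.range ℓ) + Module.finrank ℝ (LinearMap.ker ℓ) =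
        Module.finrank ℝ (Fin n → ℝ) := LinearMap.finrank_range_add_finrank_ker ℓ
    rw [LinearMap.range_eq_top.mpr hsurj, finrank_top, Module.finrank_self] at h1
    have h2 : Module.finrank ℝ (Fin n → ℝ) = n := by
      simp [Module.finrank_pi]
    rw [h2] at h1
    omega
  by_cases hA : ∃ ℓ ∈ D, ∀ x ∈ σ ∩ τ, ℓ x = 0
  · obtain ⟨ℓ, hℓD, hℓ0⟩ := hA
    refine ⟨{x ∈ τ | ℓ x = 0}, (hfacet ℓ hℓD).1, (hfacet ℓ hℓD).2, ?_⟩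
    have heq : σ ∩ {x ∈ τ | ℓ x = 0} = σ ∩ τ := by
      ext x
      constructor
      · rintro ⟨hxσ, hxτ, -⟩; exact ⟨hxσ, hxτ⟩
      · rintro ⟨hxσ, hxτ⟩; exact ⟨hxσ, hxτ, hℓ0 x ⟨hxσ, hxτ⟩⟩
    rw [heq]; exact hcross
  · push_neg at hA
    -- interior point of τ inside σ
    have hA' : ∀ ℓ ∈ D, ∃ x, x ∈ σ ∩ τ ∧ 0 < ℓ x := by
      intro ℓ hℓ
      obtain ⟨x, hx, hx0⟩ := hA ℓ hℓ
      refine ⟨x, hx, lt_of_le_of_ne ?_ (Ne.symm hx0)⟩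
      rw [hDτ] at hx
      exact hx.2 ℓ hℓ
    set g : ((Fin n → ℝ) →ₗ[ℝ] ℝ) → (Fin n → ℝ) :=
      fun ℓ => if h : ℓ ∈ D then (hA' ℓ h).choose else 0 with hg
    have hgστ : ∀ ℓ ∈ D, g ℓ ∈ σ ∩ τ := by
      intro ℓ hℓ; rw [hg]; simp only [dif_pos hℓ]; exact (hA' ℓ hℓ).choose_spec.1
    have hgpos : ∀ ℓ ∈ D, 0 < ℓ (g ℓ) := by
      intro ℓ hℓ; rw [hg]; simp only [dif_pos hℓ]; exact (hA' ℓ hℓ).choose_spec.2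
    set xs : Fin n → ℝ := ∑ ℓ ∈ D, g ℓ with hxs
    have hxsσ : xs ∈ σ := fg_sum_mem hσ D g (fun ℓ hℓ => (hgστ ℓ hℓ).1)
    have hxsτ : xs ∈ τ := fg_sum_mem hτ D g (fun ℓ hℓ => (hgστ ℓ hℓ).2)
    have hxspos : ∀ ℓ ∈ D, 0 < ℓ xs := by
      intro ℓ hℓ
      rw [hxs, map_sum]
      apply Finset.sum_pos' (fun ℓ' hℓ' => by
        have := (hgστ ℓ' hℓ').2; rw [hDτ] at this; exact this ℓ hℓ)
      exact ⟨ℓ, hℓ, hgpos ℓ hℓ⟩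
    by_cases hB : σ ⊆ τ
    · exfalso
      apply hcross
      refine ⟨0, fun x _ => le_refl _, ?_⟩
      rw [Set.inter_eq_left.mpr hB]
      ext x; simp
    · rw [Set.not_subset] at hB
      obtain ⟨y, hyσ, hyτ⟩ := hB
      have hkey : ∃ ℓ ∈ D, ¬ IsFaceOf (σ ∩ {x ∈ τ | ℓ x = 0}) σ := by
        by_contra hcon
        push_neg at hcon
        have hyneg0 : ∃ ℓ ∈ D, ℓ y < 0 := by
          by_contra hc; push_neg at hc
          exact hyτ (by rw [hDτ]; exact fun ℓ hℓ => hc ℓ hℓ)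
        set Dneg := D.filter (fun ℓ => ℓ y < 0) with hDneg
        have hDnegne : Dneg.Nonempty := by
          obtain ⟨ℓ, h1, h2⟩ := hyneg0; exact ⟨ℓ, Finset.mem_filter.mpr ⟨h1, h2⟩⟩
        set r : ((Fin n → ℝ) →ₗ[ℝ] ℝ) → ℝ := fun ℓ => ℓ xs / (ℓ xs - ℓ y) with hr
        have hr01 : ∀ ℓ ∈ Dneg, 0 < r ℓ ∧ r ℓ < 1 := by
          intro ℓ hℓ
          rw [Finset.mem_filter] at hℓ
          have h1 := hxspos ℓ hℓ.1
          have h2 := hℓ.2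
          constructor
          · exact div_pos h1 (by linarith)
          · rw [hr]; simp only []; rw [div_lt_one (by linarith)]; linarith
        set t := Dneg.inf' hDnegne r with htd
        obtain ⟨ℓs, hℓs, hℓseq⟩ := Finset.exists_mem_eq_inf' hDnegne r
        have ht0 : 0 < t := by rw [htd, hℓseq]; exact (hr01 ℓs hℓs).1
        have ht1 : t < 1 := by rw [htd, hℓseq]; exact (hr01 ℓs hℓs).2
        set w := (1 - t) • xs + t • y with hw
        have hwσ : w ∈ σ :=
          fg_add_mem hσ (fg_smul_mem hσ (by linarith) hxsσ) (fg_smul_mem hσ (le_of_lt ht0) hyσ)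
        have hwτ : w ∈ τ := by
          rw [hDτ]
          intro ℓ hℓ
          have hxp := hxspos ℓ hℓ
          simp only [hw, map_add, map_smul, smul_eq_mul]
          by_cases hy0 : 0 ≤ ℓ y
          · have h1 : 0 ≤ t * ℓ y := mul_nonneg (le_of_lt ht0) hy0
            nlinarith
          · push_neg at hy0
            have hmem : ℓ ∈ Dneg := Finset.mem_filter.mpr ⟨hℓ, hy0⟩
            have htle : t ≤ r ℓ := Finset.inf'_le r hmem
            have hd : 0 < ℓ xs - ℓ y := by linarith
            have hrc : r ℓ * (ℓ xs - ℓ y) = ℓ xs := div_mul_cancel₀ _ (ne_of_gt hd)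
            nlinarith
        have hℓsD : ℓs ∈ D := (Finset.mem_filter.mp hℓs).1
        have hwℓs : ℓs w = 0 := by
          have hyneg : ℓs y < 0 := (Finset.mem_filter.mp hℓs).2
          have hd : 0 < ℓs xs - ℓs y := by linarith [hxspos ℓs hℓsD]
          have h1 : r ℓs * (ℓs xs - ℓs y) = ℓs xs := div_mul_cancel₀ _ (ne_of_gt hd)
          have h2 : t = r ℓs := by rw [htd, hℓseq]
          simp only [hw, map_add, map_smul, smul_eq_mul]
          rw [h2]; nlinarith
        obtain ⟨mℓ, hmpos, hmeq⟩ := hcon ℓs hℓsD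
        have hwF : w ∈ σ ∩ {x ∈ τ | ℓs x = 0} := ⟨hwσ, hwτ, hwℓs⟩
        rw [hmeq] at hwF
        have hmw : mℓ w = 0 := hwF.2
        have hmxs : 0 ≤ mℓ xs := hmpos xs hxsσ
        have hmy : 0 ≤ mℓ y := hmpos y hyσ
        have hmw' : (1 - t) * mℓ xs + t * mℓ y = 0 := by
          simpa only [hw, map_add, map_smul, smul_eq_mul] using hmw
        have hmxs0 : mℓ xs = 0 := by nlinarith
        have hxsF : xs ∈ σ ∩ {x ∈ τ | ℓs x = 0} := by rw [hmeq]; exact ⟨hxsσ, hmxs0⟩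
        exact absurd hxsF.2.2 (ne_of_gt (hxspos ℓs hℓsD))
      obtain ⟨ℓ, hℓD, hℓnf⟩ := hkey
      exact ⟨{x ∈ τ | ℓ x = 0}, (hfacet ℓ hℓD).1, (hfacet ℓ hℓD).2, hℓnf⟩
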